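/- Let X and Y be finite types with basepoints 0 and maps f : X → X, g : Y → Y fixing the basepoints. Assume f is nilpotent with Γ_X connected (a rooted tree), and assume g y ≠ 0 for every nonzero y with Γ_Y connected (a wheel). Let h be the smash structure map on X × Y. Then the graph of the smash product, with vertex set {(x, y) : x ≠ 0 and y ≠ 0} and the equivalence relation generated by the pairs (p, h p) for h p ≠ (0,0), has exactly card {y : Y // y ≠ 0} equivalence classes. (Γ_{M ∧ N} consists of dim N rooted trees.) -/
import Mathlib

private lemma eqvGen_lift_eq {α β : Type*} {r : α → α → Prop} {c : α → β}
    (hc : ∀ a b, r a b → c a = c b) {a b : α} (h : Relation.EqvGen r a b) : c a = c b := by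
  induction h with
  | rel _ _ h => exact hc _ _ h
  | refl => rfl
  | symm _ _ _ ih => exact ih.symm
  | trans _ _ _ _ _ ih1 ih2 => exact ih1.trans ih2

private noncomputable def depth {X : Type*} [Zero X] [DecidableEq X] (f : X → X)
    (hfnil : ∀ x : X, ∃ n : ℕ, f^[n] x = 0) (x : X) : ℕ :=
  Nat.find (hfnil x)

private lemma depth_spec {X : Type*} [Zero X] [DecidableEq X] (f : X → X)
    (hfnil : ∀ x : X, ∃ n : ℕ, f^[n] x = 0) (x : X) :
    f^[depth f hfnil x] x = 0 :=
  Nat.find_spec (hfnil x)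

private lemma depth_min {X : Type*} [Zero X] [DecidableEq X] (f : X → X)
    (hfnil : ∀ x : X, ∃ n : ℕ, f^[n] x = 0) {x : X} {n : ℕ}
    (hn : n < depth f hfnil x) : f^[n] x ≠ 0 :=
  Nat.find_min (hfnil x) hn

private lemma depth_pos {X : Type*} [Zero X] [DecidableEq X] (f : X → X)
    (hfnil : ∀ x : X, ∃ n : ℕ, f^[n] x = 0) {x : X} (hx : x ≠ 0) :
    0 < depth f hfnil x := by
  rcases Nat.eq_zero_or_pos (depth f hfnil x) with h0 | h
  · exfalso
    have := depth_spec f hfnil x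
    rw [h0] at this
    exact hx this
  · exact h

private lemma depth_f {X : Type*} [Zero X] [DecidableEq X] (f : X → X)
    (hfnil : ∀ x : X, ∃ n : ℕ, f^[n] x = 0) {x : X}
    (hx : 0 < depth f hfnil x) :
    depth f hfnil (f x) = depth f hfnil x - 1 := by
  have key : ∀ n : ℕ, f^[n] (f x) = f^[n + 1] x := fun n =>
    (Function.iterate_succ_apply f n x).symm
  show Nat.find (hfnil (f x)) = depth f hfnil x - 1
  rw [Nat.find_eq_iff]
  constructor
  · rw [key, Nat.sub_add_cancel hx]
    exact depth_spec f hfnil x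
  · intro n hn
    rw [key]
    exact depth_min f hfnil (by omega)

theorem smash_tree_wheel_components {X Y : Type*} [Fintype X] [Fintype Y]
    [Zero X] [Zero Y] [DecidableEq X] [DecidableEq Y]
    (f : X → X) (g : Y → Y) (hf : f 0 = 0) (hg : g 0 = 0)
    (hfnil : ∀ x : X, ∃ n : ℕ, f^[n] x = 0)
    (hgwheel : ∀ y : Y, y ≠ 0 → g y ≠ 0)
    (hXconn : Nat.card (Quot (Relation.EqvGen
      (fun x y : {x : X // x ≠ 0} => f (x : X) ≠ 0 ∧ (y : X) = f (x : X)))) = 1)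
    (hYconn : Nat.card (Quot (Relation.EqvGen
      (fun x y : {y : Y // y ≠ 0} => g (x : Y) ≠ 0 ∧ (y : Y) = g (x : Y)))) = 1)
    (h : X × Y → X × Y)
    (hh : ∀ p : X × Y,
      h p = if f p.1 ≠ 0 ∧ g p.2 ≠ 0 then (f p.1, g p.2) else (0, 0)) :
    Nat.card (Quot (Relation.EqvGen
      (fun p q : {p : X × Y // p.1 ≠ 0 ∧ p.2 ≠ 0} =>
        h (p : X × Y) ≠ (0, 0) ∧ (q : X × Y) = h (p : X × Y)))) =
      Nat.card {y : Y // y ≠ 0} := by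
  classical
  set R : {p : X × Y // p.1 ≠ 0 ∧ p.2 ≠ 0} → {p : X × Y // p.1 ≠ 0 ∧ p.2 ≠ 0} → Prop :=
    fun p q => h (p : X × Y) ≠ (0, 0) ∧ (q : X × Y) = h (p : X × Y) with hRdef
  set RX : {x : X // x ≠ 0} → {x : X // x ≠ 0} → Prop :=
    fun x y => f (x : X) ≠ 0 ∧ (y : X) = f (x : X) with hRXdef
  -- iterates of g stay nonzero
  have gnz : ∀ (y : Y), y ≠ 0 → ∀ n : ℕ, g^[n] y ≠ 0 := by
    intro y hy n
    induction n with
    | zero => simpa using hy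
    | succ n ih =>
      rw [Function.iterate_succ_apply']
      exact hgwheel _ ih
  have hd0 : ∀ x : X, f^[depth f hfnil x] x = 0 := depth_spec f hfnil
  -- the "constant root" map on nonzero X
  set c : {x : X // x ≠ 0} → X := fun a => f^[depth f hfnil (a : X) - 1] (a : X) with hcdef
  have hcne : ∀ a : {x : X // x ≠ 0}, c a ≠ 0 := by
    intro a
    exact depth_min f hfnil (Nat.sub_lt (depth_pos f hfnil a.2) one_pos)
  have hcR : ∀ a b : {x : X // x ≠ 0}, RX a b → c a = c b := by
    intro a b hab
    obtain ⟨hfa, hb⟩ := hab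
    have hda : 0 < depth f hfnil (a : X) := depth_pos f hfnil a.2
    have hdfa : depth f hfnil (f (a : X)) = depth f hfnil (a : X) - 1 :=
      depth_f f hfnil hda
    have hdfapos : 0 < depth f hfnil (f (a : X)) := depth_pos f hfnil hfa
    simp only [hcdef, hb, hdfa]
    have h2 : f^[depth f hfnil (a : X) - 1 - 1] (f (a : X))
        = f^[depth f hfnil (a : X) - 1 - 1 + 1] (a : X) :=
      (Function.iterate_succ_apply f _ (a : X)).symm
    rw [h2]
    congr 1
    omega
  have hcconst : ∀ a b : {x : X // x ≠ 0}, c a = c b := by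
    have hlift : ∀ a b : {x : X // x ≠ 0}, Relation.EqvGen RX a b → c a = c b :=
      fun a b hab => eqvGen_lift_eq hcR hab
    have hsub : Subsingleton (Quot (Relation.EqvGen RX)) :=
      ((Nat.card_eq_one_iff_unique).mp hXconn).1
    intro a b
    calc c a = Quot.lift c hlift (Quot.mk _ a) := rfl
    _ = Quot.lift c hlift (Quot.mk _ b) := by rw [Subsingleton.elim (Quot.mk _ a) (Quot.mk _ b)]
    _ = c b := rfl
  -- existence of a nonzero element of X
  have hXne : Nonempty {x : X // x ≠ 0} := by
    have hne : Nonempty (Quot (Relation.EqvGen RX)) :=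
      ((Nat.card_eq_one_iff_unique).mp hXconn).2
    obtain ⟨q⟩ := hne
    obtain ⟨a, -⟩ := q.exists_rep
    exact ⟨a⟩
  obtain ⟨a₀⟩ := hXne
  set x₀ : X := c a₀ with hx₀def
  have hx₀ : x₀ ≠ 0 := hcne a₀
  have hdx₀ : depth f hfnil x₀ = 1 := by
    show Nat.find (hfnil x₀) = 1
    rw [Nat.find_eq_iff]
    refine ⟨?_, ?_⟩
    · show f^[1] x₀ = 0
      have h1 : f^[1] x₀ = f^[depth f hfnil (a₀ : X) - 1 + 1] (a₀ : X) := by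
        simp only [hx₀def, hcdef]
        rw [Function.iterate_succ_apply', Function.iterate_succ_apply']
        simp
      rw [h1, Nat.sub_add_cancel (depth_pos f hfnil a₀.2)]
      exact hd0 _
    · intro n hn
      interval_cases n
      simpa using hx₀
  -- edges of the smash graph
  have hedge : ∀ (x : X) (y : Y), x ≠ 0 → y ≠ 0 → f x ≠ 0 →
      h (x, y) = (f x, g y) ∧ h (x, y) ≠ (0, 0) := by
    intro x y hx hy hfx
    have hgy : g y ≠ 0 := hgwheel y hy
    have heq : h (x, y) = (f x, g y) := by
      rw [hh]
      exact if_pos ⟨hfx, hgy⟩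
    refine ⟨heq, ?_⟩
    rw [heq]
    intro hcon
    exact hfx (congrArg Prod.fst hcon)
  -- chains in the smash graph
  have chain : ∀ (n : ℕ) (p q : {p : X × Y // p.1 ≠ 0 ∧ p.2 ≠ 0}),
      n < depth f hfnil p.1.1 → (q : X × Y) = (f^[n] p.1.1, g^[n] p.1.2) →
      Relation.EqvGen R p q := by
    intro n
    induction n with
    | zero =>
      intro p q _ hq
      have : q = p := Subtype.ext (by simpa using hq)
      rw [this]
      exact Relation.EqvGen.refl p
    | succ n ih =>
      intro p q hn hq
      obtain ⟨⟨x, y⟩, hx, hy⟩ := p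
      have hn' : n + 1 < depth f hfnil x := hn
      have hq2 : (q : X × Y) = (f^[n + 1] x, g^[n + 1] y) := hq
      have hmid1 : f^[n] x ≠ 0 := depth_min f hfnil (by omega)
      have hmid2 : g^[n] y ≠ 0 := gnz y hy n
      have h1 : Relation.EqvGen R ⟨(x, y), hx, hy⟩ ⟨(f^[n] x, g^[n] y), hmid1, hmid2⟩ :=
        ih ⟨(x, y), hx, hy⟩ ⟨(f^[n] x, g^[n] y), hmid1, hmid2⟩ (by omega) rfl
      have hfmid : f (f^[n] x) ≠ 0 := by
        rw [← Function.iterate_succ_apply' f n x]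
        exact depth_min f hfnil hn'
      obtain ⟨heq, hne0⟩ := hedge (f^[n] x) (g^[n] y) hmid1 hmid2 hfmid
      have h2 : R ⟨(f^[n] x, g^[n] y), hmid1, hmid2⟩ q := by
        refine ⟨hne0, ?_⟩
        rw [heq, hq2]
        rw [Function.iterate_succ_apply' f n x, Function.iterate_succ_apply' g n y]
      exact Relation.EqvGen.trans _ _ _ h1 (Relation.EqvGen.rel _ _ h2)
  -- the classifying map
  set Φ : {p : X × Y // p.1 ≠ 0 ∧ p.2 ≠ 0} → {y : Y // y ≠ 0} :=
    fun p => ⟨g^[depth f hfnil p.1.1 - 1] p.1.2, gnz _ p.2.2 _⟩ with hΦdef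
  have hΦR : ∀ p q, R p q → Φ p = Φ q := by
    intro p q hpq
    obtain ⟨hne0, hq⟩ := hpq
    obtain ⟨⟨x, y⟩, hx, hy⟩ := p
    have hgy : g y ≠ 0 := hgwheel y hy
    have hfx : f x ≠ 0 := by
      by_contra hfx
      apply hne0
      rw [hh]
      exact if_neg (fun hcon => hcon.1 hfx)
    have hhp : h (x, y) = (f x, g y) := by rw [hh]; exact if_pos ⟨hfx, hgy⟩
    have hq' : (q : X × Y) = (f x, g y) := by rw [hq]; exact hhp
    have hdx : 0 < depth f hfnil x := depth_pos f hfnil hx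
    have hdfx : depth f hfnil (f x) = depth f hfnil x - 1 := depth_f f hfnil hdx
    have hdfxpos : 0 < depth f hfnil (f x) := depth_pos f hfnil hfx
    apply Subtype.ext
    simp only [hΦdef, hq']
    rw [hdfx]
    have h2 : g^[depth f hfnil x - 1 - 1] (g y)
        = g^[depth f hfnil x - 1 - 1 + 1] y :=
      (Function.iterate_succ_apply g _ y).symm
    rw [h2]
    congr 1
    omega
  -- every vertex is connected to (x₀, Φ p)
  have hmk : ∀ p : {p : X × Y // p.1 ≠ 0 ∧ p.2 ≠ 0},
      Relation.EqvGen R p ⟨(x₀, (Φ p : Y)), hx₀, (Φ p).2⟩ := by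
    intro p
    have hroot : f^[depth f hfnil p.1.1 - 1] p.1.1 = x₀ := by
      have := hcconst ⟨p.1.1, p.2.1⟩ a₀
      simpa [hcdef, hx₀def] using this
    apply chain (depth f hfnil p.1.1 - 1)
    · exact Nat.sub_lt (depth_pos f hfnil p.2.1) one_pos
    · simp only [hΦdef]
      rw [hroot]
  -- the equivalence
  have e : Quot (Relation.EqvGen R) ≃ {y : Y // y ≠ 0} := by
    refine ⟨Quot.lift Φ (fun a b hab => eqvGen_lift_eq hΦR hab),
      fun y => Quot.mk _ ⟨(x₀, (y : Y)), hx₀, y.2⟩, ?_, ?_⟩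
    · apply Quot.ind
      intro p
      exact (Quot.sound (hmk p)).symm
    · intro y
      apply Subtype.ext
      simp only [hΦdef, hdx₀]
      simp
  exact Nat.card_congr e
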